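/- Let m be a positive integer and t ∈ [0,1). For s ∈ ℝ and g : ℕ₊ → ℂ set ‖g‖_s := (Σ_{k≥1} k^{2s/m}·|g_k|²)^{1/2}. Let τ = (τ_{jk})_{j,k≥1} be a complex matrix whose associated linear map (τg)_j := Σ_{k≥1} τ_{jk}·g_k satisfies ‖τg‖_{1/2} ≤ A·‖g‖_{1/2+t} and ‖τg‖_{3/2−t} ≤ B·‖g‖_{3/2} for all g, for some finite constants A, B ≥ 0. For N ∈ ℕ₊ let T_N(τ) be the truncated matrix with entries (T_N(τ))_{jk} = τ_{jk} if both j ≤ N and k ≤ N, and 0 otherwise. Then for every f : ℕ₊ → ℂ with ‖f‖_{3/2} < ∞, ‖(τ − T_N(τ))f‖_{1/2} ≤ N^{−(1−t)/m}·(A² + B²)^{1/2}·‖f‖_{3/2}. -/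

import Mathlib

open scoped ENNReal

/-- The weighted ℓ²-norm `‖g‖ₛ = (Σ_{k≥1} k^{2s/m} |g_k|²)^{1/2}`, valued in `ℝ≥0∞`. -/
noncomputable def wnormP (m : ℕ) (s : ℝ) (g : ℕ+ → ℂ) : ℝ≥0∞ :=
  (∑' k : ℕ+, ENNReal.ofReal ((k : ℝ) ^ (2*s/(m:ℝ)) * ‖g k‖^2)) ^ (1/2 : ℝ)

/-- The linear map associated to the matrix `τ`: `(τ g)_j := Σ_k τ_{jk} g_k`. -/
noncomputable def matApply (τ : ℕ+ → ℕ+ → ℂ) (g : ℕ+ → ℂ) : ℕ+ → ℂ :=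
  fun j => ∑' k : ℕ+, τ j k * g k

/-- The truncated matrix `T_N(τ)`. -/
def truncMat (N : ℕ+) (τ : ℕ+ → ℕ+ → ℂ) : ℕ+ → ℕ+ → ℂ :=
  fun j k => if j ≤ N ∧ k ≤ N then τ j k else 0

lemma wnormP_sq (m : ℕ) (s : ℝ) (g : ℕ+ → ℂ) :
    wnormP m s g ^ (2:ℝ) = ∑' k : ℕ+, ENNReal.ofReal ((k : ℝ) ^ (2*s/(m:ℝ)) * ‖g k‖^2) := by
  rw [wnormP, ← ENNReal.rpow_mul]
  norm_num

lemma summable_of_tsum_ofReal_ne_top {a : ℕ+ → ℝ} (h0 : ∀ k, 0 ≤ a k)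
    (h : (∑' k, ENNReal.ofReal (a k)) ≠ ⊤) : Summable a := by
  have h1 : Summable (fun k => (a k).toNNReal) := by
    apply ENNReal.tsum_coe_ne_top_iff_summable.mp
    simpa [ENNReal.ofReal] using h
  have h2 := NNReal.summable_coe.2 h1
  refine h2.congr fun k => ?_
  exact Real.coe_toNNReal _ (h0 k)

lemma keylem (m : ℕ) (hm : 0 < m) (N k : ℕ+) (hk : (N:ℕ+) < k) (a b : ℝ) (hab : a ≤ b) :
    (k:ℝ) ^ (a/(m:ℝ)) ≤ (N:ℝ) ^ ((a-b)/(m:ℝ)) * (k:ℝ) ^ (b/(m:ℝ)) := by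
  have hN : (0:ℝ) < N := by exact_mod_cast N.pos
  have hk' : (N:ℝ) ≤ (k:ℝ) := by exact_mod_cast hk.le
  have hkpos : (0:ℝ) < k := lt_of_lt_of_le hN hk'
  have h1 : (k:ℝ) ^ (a/(m:ℝ)) = (k:ℝ) ^ ((a-b)/(m:ℝ)) * (k:ℝ) ^ (b/(m:ℝ)) := by
    rw [← Real.rpow_add hkpos]; ring_nf
  rw [h1]
  have hm' : (0:ℝ) < m := by exact_mod_cast hm
  have : (k:ℝ) ^ ((a-b)/(m:ℝ)) ≤ (N:ℝ) ^ ((a-b)/(m:ℝ)) :=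
    Real.rpow_le_rpow_of_nonpos hN hk' (by
      apply div_nonpos_of_nonpos_of_nonneg (by linarith) hm'.le)
  exact mul_le_mul_of_nonneg_right this (Real.rpow_nonneg hkpos.le _)


lemma sq_le_of_le {x y : ℝ≥0∞} {c : ℝ} (hc : 0 ≤ c) (h : x ≤ ENNReal.ofReal c * y) :
    x ^ (2:ℝ) ≤ ENNReal.ofReal (c^2) * y ^ (2:ℝ) := by
  have h2 := ENNReal.rpow_le_rpow h (by norm_num : (0:ℝ) ≤ 2)
  rw [ENNReal.mul_rpow_of_nonneg _ _ (by norm_num : (0:ℝ) ≤ 2)] at h2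
  refine h2.trans_eq ?_
  congr 1
  rw [ENNReal.ofReal_rpow_of_nonneg hc (by norm_num : (0:ℝ) ≤ 2),
    show (2:ℝ) = ((2:ℕ):ℝ) by norm_num, Real.rpow_natCast]

lemma row_bound (m : ℕ) (s₁ s₂ : ℝ) (hs₁ : 0 ≤ s₁) (τ : ℕ+ → ℕ+ → ℂ) (A : ℝ) (hA0 : 0 ≤ A)
    (hA : ∀ g : ℕ+ → ℂ, wnormP m s₁ (matApply τ g) ≤ ENNReal.ofReal A * wnormP m s₂ g)
    (j : ℕ+) (F : Finset ℕ+) :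
    ∑ k ∈ F, (k:ℝ) ^ (-(2*s₂/(m:ℝ))) * ‖τ j k‖^2 ≤ A^2 := by
  set e := 2*s₂/(m:ℝ) with he
  set g : ℕ+ → ℂ := fun k => if k ∈ F then (starRingEnd ℂ) (τ j k) * ((k:ℝ) ^ (-e) : ℝ) else 0
    with hg
  set S := ∑ k ∈ F, (k:ℝ) ^ (-e) * ‖τ j k‖^2 with hS
  have hterm0 : ∀ k : ℕ+, 0 ≤ (k:ℝ) ^ (-e) * ‖τ j k‖^2 := fun k =>
    mul_nonneg (Real.rpow_nonneg (by positivity) _) (sq_nonneg _)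
  have hS0 : 0 ≤ S := Finset.sum_nonneg fun k _ => hterm0 k
  have hkpos : ∀ k : ℕ+, (0:ℝ) < k := fun k => by exact_mod_cast k.pos
  -- value of τ g at j
  have hval : matApply τ g j = (S : ℂ) := by
    rw [matApply]
    rw [tsum_eq_sum (s := F) (by intro k hk; simp [hg, hk])]
    rw [hS]
    push_cast
    refine Finset.sum_congr rfl fun k hk => ?_
    simp only [hg, if_pos hk]
    rw [← mul_assoc, Complex.mul_conj, Complex.normSq_eq_norm_sq]
    push_cast
    ring
  -- wnormP of g
  have hwg : wnormP m s₂ g = (ENNReal.ofReal S) ^ (1/2 : ℝ) := by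
    rw [wnormP, ← he]
    congr 1
    rw [tsum_eq_sum (s := F) (by intro k hk; simp [hg, hk])]
    rw [hS, ENNReal.ofReal_sum_of_nonneg (fun k _ => hterm0 k)]
    refine Finset.sum_congr rfl fun k hk => ?_
    congr 1
    simp only [hg, if_pos hk]
    rw [norm_mul, mul_pow, RingHomIsometric.norm_map]
    rw [Complex.norm_real, Real.norm_eq_abs,
      abs_of_nonneg (Real.rpow_nonneg (hkpos k).le _)]
    have hone : (k:ℝ)^e * (k:ℝ)^(-e) = 1 := by
      rw [← Real.rpow_add (hkpos k)]; simp
    linear_combination (‖τ j k‖^2 * (k:ℝ)^(-e)) * hone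
  set x := ENNReal.ofReal S with hx
  have hchain : x ≤ ENNReal.ofReal A * x ^ (1/2:ℝ) := by
    have h1 : x ^ (2:ℝ) ≤ wnormP m s₁ (matApply τ g) ^ (2:ℝ) := by
      rw [wnormP_sq]
      calc x ^ (2:ℝ) = ENNReal.ofReal (S^2) := by
            rw [hx, show (2:ℝ) = ((2:ℕ):ℝ) by norm_num, ENNReal.rpow_natCast,
              ENNReal.ofReal_pow hS0]
        _ ≤ ENNReal.ofReal ((j:ℝ) ^ (2*s₁/(m:ℝ)) * ‖matApply τ g j‖^2) := by
            apply ENNReal.ofReal_le_ofReal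
            rw [hval]
            rw [Complex.norm_real, Real.norm_eq_abs, sq_abs]
            have hj1 : (1:ℝ) ≤ (j:ℝ) ^ (2*s₁/(m:ℝ)) := by
              have := Real.rpow_le_rpow_of_exponent_le
                (by exact_mod_cast j.one_le : (1:ℝ) ≤ (j:ℝ)) (by positivity : (0:ℝ) ≤ 2*s₁/(m:ℝ))
              simpa using this
            exact le_mul_of_one_le_left (sq_nonneg S) hj1
        _ ≤ _ := ENNReal.le_tsum j
    have h2 : x ≤ wnormP m s₁ (matApply τ g) := by
      have := ENNReal.rpow_le_rpow h1 (by norm_num : (0:ℝ) ≤ 1/2)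
      rwa [← ENNReal.rpow_mul, ← ENNReal.rpow_mul, (by norm_num : (2:ℝ) * (1/2) = 1),
        ENNReal.rpow_one, ENNReal.rpow_one] at this
    calc x ≤ _ := h2
      _ ≤ ENNReal.ofReal A * wnormP m s₂ g := hA g
      _ = ENNReal.ofReal A * x ^ (1/2:ℝ) := by rw [hwg]
  -- conclude S ≤ A^2
  by_cases h0 : x = 0
  · have : S = 0 := le_antisymm (by simpa [hx, ENNReal.ofReal_eq_zero] using h0) hS0
    rw [hS] at this ⊢
    rw [this] at *
    positivity
  · have hxtop : x ≠ ⊤ := ENNReal.ofReal_ne_top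
    have hhalf0 : x ^ (1/2:ℝ) ≠ 0 := by
      simp [ENNReal.rpow_eq_zero_iff, h0, hxtop]
    have hhalftop : x ^ (1/2:ℝ) ≠ ⊤ := by
      simp [ENNReal.rpow_eq_top_iff, h0, hxtop]
    have hsplit : x = x ^ (1/2:ℝ) * x ^ (1/2:ℝ) := by
      rw [← ENNReal.rpow_add_of_nonneg (1/2) (1/2) (by norm_num) (by norm_num)]
      norm_num
    have hcancel : x ^ (1/2:ℝ) ≤ ENNReal.ofReal A := by
      nth_rewrite 1 [hsplit] at hchain
      exact (ENNReal.mul_le_mul_iff_left hhalf0 hhalftop).mp hchain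
    have : x ≤ ENNReal.ofReal (A^2) := by
      rw [hsplit, sq, ENNReal.ofReal_mul hA0]
      exact mul_le_mul' hcancel hcancel
    rw [hx] at this
    exact (ENNReal.ofReal_le_ofReal_iff (by positivity)).mp this

theorem stmt9 (m : ℕ) (hm : 0 < m) (t : ℝ) (ht0 : 0 ≤ t) (ht1 : t < 1)
    (τ : ℕ+ → ℕ+ → ℂ) (A B : ℝ) (hA0 : 0 ≤ A) (hB0 : 0 ≤ B)
    (hA : ∀ g : ℕ+ → ℂ, wnormP m (1/2) (matApply τ g) ≤ ENNReal.ofReal A * wnormP m (1/2 + t) g)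
    (hB : ∀ g : ℕ+ → ℂ, wnormP m (3/2 - t) (matApply τ g) ≤ ENNReal.ofReal B * wnormP m (3/2) g)
    (N : ℕ+) :
    ∀ f : ℕ+ → ℂ, wnormP m (3/2) f < ⊤ →
      wnormP m (1/2) (fun j => matApply τ f j - matApply (truncMat N τ) f j)
        ≤ ENNReal.ofReal ((N : ℝ) ^ (-(1 - t)/(m:ℝ)) * Real.sqrt (A^2 + B^2))
          * wnormP m (3/2) f := by
  intro f hf
  have hm' : (0:ℝ) < m := by exact_mod_cast hm
  have hkpos : ∀ k : ℕ+, (0:ℝ) < k := fun k => by exact_mod_cast k.pos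
  -- base sum finiteness and summability
  have hWf_ne : (∑' k : ℕ+, ENNReal.ofReal ((k:ℝ) ^ (2*(3/2)/(m:ℝ)) * ‖f k‖^2)) ≠ ⊤ := by
    rw [wnormP] at hf
    exact ((ENNReal.rpow_lt_top_iff_of_pos (by norm_num : (0:ℝ) < 1/2)).mp hf).ne
  have hf3 : Summable (fun k : ℕ+ => (k:ℝ) ^ (2*(3/2)/(m:ℝ)) * ‖f k‖^2) :=
    summable_of_tsum_ofReal_ne_top (fun k => by positivity) hWf_ne
  -- row summability from the hypothesis hA
  have hrowS : ∀ j : ℕ+, Summable (fun k : ℕ+ => (k:ℝ) ^ (-(2*(1/2+t)/(m:ℝ))) * ‖τ j k‖^2) :=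
    fun j => summable_of_sum_le (fun k => by positivity)
      (fun F => row_bound m (1/2) (1/2+t) (by norm_num) τ A hA0 hA j F)
  -- summability of the (1/2+t)-weighted f
  have hfe : Summable (fun k : ℕ+ => (k:ℝ) ^ (2*(1/2+t)/(m:ℝ)) * ‖f k‖^2) := by
    refine hf3.of_nonneg_of_le (fun k => by positivity) (fun k => ?_)
    refine mul_le_mul_of_nonneg_right ?_ (sq_nonneg _)
    refine Real.rpow_le_rpow_of_exponent_le (by exact_mod_cast k.one_le) ?_
    gcongr
    linarith
  -- pointwise summability of the matrix-vector products
  have hsum : ∀ j : ℕ+, Summable (fun k : ℕ+ => τ j k * f k) := by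
    intro j
    apply Summable.of_norm
    set e := 2*(1/2+t)/(m:ℝ) with he
    refine Summable.of_nonneg_of_le (fun k => norm_nonneg _) (fun k => ?_)
      (((hrowS j).add hfe).div_const 2)
    rw [norm_mul]
    have hone : (k:ℝ)^(-(e/2)) * (k:ℝ)^(e/2) = 1 := by
      rw [← Real.rpow_add (hkpos k)]; simp
    have hpow : ∀ c : ℝ, ((k:ℝ)^c)^2 = (k:ℝ)^(c+c) := fun c => by
      rw [sq, ← Real.rpow_add (hkpos k)]
    set a := (k:ℝ)^(-(e/2)) * ‖τ j k‖ with ha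
    set b := (k:ℝ)^(e/2) * ‖f k‖ with hb
    have hab : ‖τ j k‖ * ‖f k‖ = a * b := by
      rw [ha, hb]; linear_combination (-(‖τ j k‖ * ‖f k‖)) * hone
    have ha2 : a^2 = (k:ℝ)^(-e) * ‖τ j k‖^2 := by
      rw [ha, mul_pow, hpow]
      have : -(e/2) + -(e/2) = -e := by ring
      rw [this]
    have hb2 : b^2 = (k:ℝ)^e * ‖f k‖^2 := by
      rw [hb, mul_pow, hpow]
      have : e/2 + e/2 = e := by ring
      rw [this]
    rw [hab]
    linarith [two_mul_le_add_sq a b, ha2, hb2]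
  -- low and high parts of f
  set fl : ℕ+ → ℂ := fun k => if k ≤ N then f k else 0 with hfl
  set fh : ℕ+ → ℂ := fun k => if k ≤ N then 0 else f k with hfh
  have hsumfl : ∀ j : ℕ+, Summable (fun k => τ j k * fl k) := by
    intro j
    refine summable_of_ne_finset_zero (s := Finset.Iic N) (fun k hk => ?_)
    rw [Finset.mem_Iic] at hk
    simp [hfl, hk]
  have hsumfh : ∀ j : ℕ+, Summable (fun k => τ j k * fh k) := by
    intro j
    have heq : (fun k => τ j k * fh k) = fun k => τ j k * f k - τ j k * fl k := by
      funext k; by_cases h : k ≤ N <;> simp [hfl, hfh, h]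
    rw [heq]
    exact (hsum j).sub (hsumfl j)
  -- pointwise identity for the difference
  have hD : ∀ j : ℕ+, matApply τ f j - matApply (truncMat N τ) f j
      = if j ≤ N then matApply τ fh j else matApply τ f j := by
    intro j
    by_cases hj : j ≤ N
    · rw [if_pos hj]
      have h1 : matApply (truncMat N τ) f j = matApply τ fl j := by
        rw [matApply, matApply]
        congr 1; funext k
        by_cases hk : k ≤ N <;> simp [truncMat, hj, hk, hfl]
      have h2 : matApply τ f j = matApply τ fl j + matApply τ fh j := by
        rw [matApply, matApply, matApply, ← Summable.tsum_add (hsumfl j) (hsumfh j)]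
        congr 1; funext k
        by_cases hk : k ≤ N <;> simp [hfl, hfh, hk]
      rw [h1, h2]; ring
    · rw [if_neg hj]
      have h1 : matApply (truncMat N τ) f j = 0 := by
        rw [matApply]; simp [truncMat, hj]
      rw [h1, sub_zero]
  -- the constant
  set C := (N:ℝ) ^ ((2*t-2)/(m:ℝ)) with hC
  have hC0 : 0 ≤ C := Real.rpow_nonneg (hkpos N).le _
  set D : ℕ+ → ℂ := fun j => matApply τ f j - matApply (truncMat N τ) f j with hDdef
  -- step 1+2 : squared norm of D bounded by two sums
  have step12 : wnormP m (1/2) D ^ (2:ℝ)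
      ≤ wnormP m (1/2) (matApply τ fh) ^ (2:ℝ)
        + ENNReal.ofReal C * wnormP m (3/2-t) (matApply τ f) ^ (2:ℝ) := by
    rw [wnormP_sq, wnormP_sq, wnormP_sq]
    have key : ∀ j : ℕ+, ENNReal.ofReal ((j:ℝ) ^ (2*(1/2)/(m:ℝ)) * ‖D j‖^2)
        ≤ ENNReal.ofReal ((j:ℝ) ^ (2*(1/2)/(m:ℝ)) * ‖matApply τ fh j‖^2)
          + ENNReal.ofReal C * ENNReal.ofReal ((j:ℝ) ^ (2*(3/2-t)/(m:ℝ)) * ‖matApply τ f j‖^2) := by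
      intro j
      simp only [hDdef]
      rw [hD j]
      by_cases hj : j ≤ N
      · rw [if_pos hj]
        exact le_self_add
      · rw [if_neg hj]
        refine le_add_self.trans' ?_
        rw [← ENNReal.ofReal_mul hC0]
        apply ENNReal.ofReal_le_ofReal
        rw [← mul_assoc]
        refine mul_le_mul_of_nonneg_right ?_ (sq_nonneg _)
        have := keylem m hm N j (not_le.mp hj) (2*(1/2)) (2*(3/2-t)) (by linarith)
        have hexp : (2*(1/2) - 2*(3/2-t)) = 2*t-2 := by ring
        rwa [hexp] at this
    calc (∑' j : ℕ+, ENNReal.ofReal ((j:ℝ) ^ (2*(1/2)/(m:ℝ)) * ‖D j‖^2))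
        ≤ ∑' j : ℕ+, (ENNReal.ofReal ((j:ℝ) ^ (2*(1/2)/(m:ℝ)) * ‖matApply τ fh j‖^2)
          + ENNReal.ofReal C * ENNReal.ofReal ((j:ℝ) ^ (2*(3/2-t)/(m:ℝ)) * ‖matApply τ f j‖^2)) :=
        ENNReal.tsum_le_tsum key
      _ = _ := by rw [ENNReal.tsum_add, ENNReal.tsum_mul_left]
  -- step 3 : hA applied to fh, squared
  have step3 : wnormP m (1/2) (matApply τ fh) ^ (2:ℝ)
      ≤ ENNReal.ofReal (A^2) * wnormP m (1/2+t) fh ^ (2:ℝ) := by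
    exact sq_le_of_le hA0 (hA fh)
  -- step 4 : high-frequency decay of fh
  have step4 : wnormP m (1/2+t) fh ^ (2:ℝ)
      ≤ ENNReal.ofReal C * wnormP m (3/2) f ^ (2:ℝ) := by
    rw [wnormP_sq, wnormP_sq]
    rw [← ENNReal.tsum_mul_left]
    refine ENNReal.tsum_le_tsum (fun k => ?_)
    by_cases hk : k ≤ N
    · simp [hfh, hk]
    · rw [hfh]
      simp only [if_neg hk]
      rw [← ENNReal.ofReal_mul hC0]
      apply ENNReal.ofReal_le_ofReal
      rw [← mul_assoc]
      refine mul_le_mul_of_nonneg_right ?_ (sq_nonneg _)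
      have := keylem m hm N k (not_le.mp hk) (2*(1/2+t)) (2*(3/2)) (by linarith)
      have hexp : (2*(1/2+t) - 2*(3/2)) = 2*t-2 := by ring
      rwa [hexp] at this
  -- step 5 : hB applied to f, squared
  have step5 : wnormP m (3/2-t) (matApply τ f) ^ (2:ℝ)
      ≤ ENNReal.ofReal (B^2) * wnormP m (3/2) f ^ (2:ℝ) := by
    exact sq_le_of_le hB0 (hB f)
  -- combine
  have combine : wnormP m (1/2) D ^ (2:ℝ)
      ≤ ENNReal.ofReal (C * (A^2 + B^2)) * wnormP m (3/2) f ^ (2:ℝ) := by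
    calc wnormP m (1/2) D ^ (2:ℝ)
        ≤ wnormP m (1/2) (matApply τ fh) ^ (2:ℝ)
          + ENNReal.ofReal C * wnormP m (3/2-t) (matApply τ f) ^ (2:ℝ) := step12
      _ ≤ ENNReal.ofReal (A^2) * (ENNReal.ofReal C * wnormP m (3/2) f ^ (2:ℝ))
          + ENNReal.ofReal C * (ENNReal.ofReal (B^2) * wnormP m (3/2) f ^ (2:ℝ)) := by
          exact add_le_add (step3.trans (mul_le_mul_right step4 _))
            (mul_le_mul_right step5 _)
      _ = ENNReal.ofReal (C * (A^2 + B^2)) * wnormP m (3/2) f ^ (2:ℝ) := by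
          rw [ENNReal.ofReal_mul hC0, ENNReal.ofReal_add (by positivity) (by positivity)]
          ring
  -- take square roots
  have final := ENNReal.rpow_le_rpow combine (by norm_num : (0:ℝ) ≤ 1/2)
  rw [ENNReal.mul_rpow_of_nonneg _ _ (by norm_num : (0:ℝ) ≤ 1/2),
    ← ENNReal.rpow_mul, ← ENNReal.rpow_mul,
    show (2:ℝ) * (1/2) = 1 by norm_num, ENNReal.rpow_one, ENNReal.rpow_one,
    ENNReal.ofReal_rpow_of_nonneg (by positivity) (by norm_num : (0:ℝ) ≤ 1/2)] at final
  have hconst : (C * (A^2 + B^2)) ^ (1/2:ℝ)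
      = (N : ℝ) ^ (-(1 - t)/(m:ℝ)) * Real.sqrt (A^2 + B^2) := by
    rw [Real.mul_rpow hC0 (by positivity), hC, ← Real.rpow_mul (hkpos N).le]
    rw [show (2*t-2)/(m:ℝ) * (1/2) = -(1-t)/(m:ℝ) by ring]
    rw [Real.sqrt_eq_rpow]
  rw [hconst] at final
  exact final
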